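/- Let p be a prime and R a finite perfect 𝔽_p-algebra. Let ℤ_pR denote the p-adic completion of ℤR (equivalently, the monoid algebra of (R,·) over ℤ_p) and let θ : ℤ_pR → C(R) be the natural surjective ring homomorphism. Then there exists an idempotent e ∈ ℤ_pR such that ker θ = e·ℤ_pR and the restriction of θ to the ideal (1−e)·ℤ_pR is a ring isomorphism onto C(R) (indeed a topological isomorphism of compact rings). -/

import Mathlib

set_option synthInstance.maxHeartbeats 1000000
set_option maxHeartbeats 1000000

open MonoidAlgebra

/-- `ℤR`: the monoid algebra over `ℤ` of the multiplicative monoid `(R, ·)`. -/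
abbrev ZR (R : Type*) [CommRing R] : Type _ := MonoidAlgebra ℤ R

/-- The canonical ring homomorphism `π : ℤR → R`, `Σ n_r [r] ↦ Σ n_r r`. -/
noncomputable def piHom (R : Type*) [CommRing R] : ZR R →+* R :=
  (MonoidAlgebra.lift ℤ R R (MonoidHom.id R)).toRingHom

/-- The ideal `I = ker (π : ℤR → R)`. -/
noncomputable def Iid (R : Type*) [CommRing R] : Ideal (ZR R) := RingHom.ker (piHom R)

/-- The inverse limit `lim_ν A⧸I^ν` realized as a subring of the product `Π ν, A⧸I^ν`
(families compatible under the canonical factor maps). -/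
def Clim (A : Type*) [CommRing A] (I : Ideal A) : Subring (Π ν : ℕ, A ⧸ I ^ ν) where
  carrier := { x | ∀ ⦃m ν : ℕ⦄ (h : m ≤ ν),
    Ideal.Quotient.factor (Ideal.pow_le_pow_right h) (x ν) = x m }
  zero_mem' := by intro m ν h; simp
  one_mem' := by intro m ν h; simp
  add_mem' := by intro x y hx hy m ν h; simp only [Pi.add_apply, map_add, hx h, hy h]
  mul_mem' := by intro x y hx hy m ν h; simp only [Pi.mul_apply, map_mul, hx h, hy h]
  neg_mem' := by intro x hx m ν h; simp only [Pi.neg_apply, map_neg, hx h]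

/-- The projection of the completion `lim_ν A⧸I^ν` onto its `ν`-th level `A⧸I^ν`. -/
def Ceval (A : Type*) [CommRing A] (I : Ideal A) (ν : ℕ) : Clim A I →+* A ⧸ I ^ ν :=
  (Pi.evalRingHom _ ν).comp (Clim A I).subtype

/-- The canonical map `A → lim_ν A⧸I^ν`. -/
def CofRingHom (A : Type*) [CommRing A] (I : Ideal A) : A →+* Clim A I where
  toFun a := ⟨fun ν => Ideal.Quotient.mk _ a, fun _ _ _ => Ideal.Quotient.factor_mk _ _⟩
  map_one' := rfl
  map_mul' _ _ := rfl
  map_zero' := rfl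
  map_add' _ _ := rfl

/-- `C(R)`: the `I`-adic completion of `ℤR`. -/
noncomputable abbrev CR (R : Type*) [CommRing R] : Type _ := Clim (ZR R) (Iid R)

/-- The canonical projection `π̄ : C(R) → R` induced by `π`. -/
noncomputable def CtoR (R : Type*) [CommRing R] : CR R →+* R :=
  (Ideal.Quotient.lift (Iid R) (piHom R) (fun _ ha => ha)).comp
    (((Ideal.quotEquivOfEq (pow_one (Iid R))).toRingHom).comp (Ceval (ZR R) (Iid R) 1))

/-- For ideals `I ≤ J` of `A`, the natural ring homomorphism `lim_ν A/I^ν → lim_ν A/J^ν`. -/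
noncomputable def thetaMap (A : Type*) [CommRing A] (I J : Ideal A) (hIJ : I ≤ J) :
    Clim A I →+* Clim A J :=
  RingHom.codRestrict
    ((Pi.ringHom fun ν => (Ideal.Quotient.factor (S := I ^ ν) (T := J ^ ν)
        (Ideal.pow_right_mono hIJ ν)).comp (Pi.evalRingHom _ ν)).comp (Clim A I).subtype)
    (Clim A J)
    (by
      intro x m ν h
      obtain ⟨a, ha⟩ := Ideal.Quotient.mk_surjective ((x : Π ν, A ⧸ I ^ ν) ν)
      have hm : (x : Π ν, A ⧸ I ^ ν) m = Ideal.Quotient.mk _ a := by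
        rw [← x.2 h, ← ha, Ideal.Quotient.factor_mk]
      change Ideal.Quotient.factor (Ideal.pow_le_pow_right h) (Ideal.Quotient.factor
        (Ideal.pow_right_mono hIJ ν) ((x : Π ν, A ⧸ I ^ ν) ν)) =
        Ideal.Quotient.factor (Ideal.pow_right_mono hIJ m) ((x : Π ν, A ⧸ I ^ ν) m)
      rw [← ha, hm, Ideal.Quotient.factor_mk, Ideal.Quotient.factor_mk,
        Ideal.Quotient.factor_mk])

lemma p_mem_Iid (p : ℕ) (R : Type*) [CommRing R] [CharP R p] : (p : ZR R) ∈ Iid R := by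
  have h : piHom R (p : ZR R) = 0 := by
    rw [map_natCast]; exact CharP.cast_eq_zero R p
  exact RingHom.mem_ker.mpr h

lemma spanP_le_Iid (p : ℕ) (R : Type*) [CommRing R] [CharP R p] :
    Ideal.span {(p : ZR R)} ≤ Iid R :=
  (Ideal.span_le).mpr (Set.singleton_subset_iff.mpr (p_mem_Iid p R))

section Generic

open Ideal Ideal.Quotient

variable {A : Type*} [CommRing A] (P I : Ideal A)

/-- transition maps of the tower `A/P^ν`. -/
noncomputable def qtrans {m ν : ℕ} (h : m ≤ ν) : A ⧸ P ^ ν →+* A ⧸ P ^ m :=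
  Ideal.Quotient.factor (Ideal.pow_le_pow_right h)

lemma trans_mk {m ν : ℕ} (h : m ≤ ν) (a : A) :
    qtrans P h (Ideal.Quotient.mk _ a) = Ideal.Quotient.mk _ a :=
  Ideal.Quotient.factor_mk _ _

lemma trans_surjective {m ν : ℕ} (h : m ≤ ν) : Function.Surjective (qtrans P h) := by
  intro y
  obtain ⟨a, rfl⟩ := Ideal.Quotient.mk_surjective y
  exact ⟨Ideal.Quotient.mk _ a, trans_mk P h a⟩

/-- The image of `I` in `A/P^ν`. -/
noncomputable def Ib (ν : ℕ) : Ideal (A ⧸ P ^ ν) := I.map (Ideal.Quotient.mk (P ^ ν))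

lemma trans_comp_mk {m ν : ℕ} (h : m ≤ ν) :
    (qtrans P h).comp (Ideal.Quotient.mk (P ^ ν)) = Ideal.Quotient.mk (P ^ m) :=
  Ideal.Quotient.factor_comp_mk _

lemma trans_map_Ib {m ν : ℕ} (h : m ≤ ν) : (Ib P I ν).map (qtrans P h) = Ib P I m := by
  rw [Ib, Ib, Ideal.map_map, trans_comp_mk]

lemma mem_Ib_pow {ν k : ℕ} (a : A) :
    Ideal.Quotient.mk (P ^ ν) a ∈ (Ib P I ν) ^ k ↔ a ∈ I ^ k ⊔ P ^ ν := by
  rw [Ib, ← Ideal.map_pow, Ideal.mem_quotient_iff_mem_sup]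

lemma theta_apply {P I : Ideal A} (hPI : P ≤ I) (x : Clim A P) (ν : ℕ) :
    ((thetaMap A P I hPI x : Clim A I) : ∀ ν, A ⧸ I ^ ν) ν
      = Ideal.Quotient.factor (S := P ^ ν) (T := I ^ ν) (Ideal.pow_right_mono hPI ν)
          ((x : ∀ ν, A ⧸ P ^ ν) ν) := rfl

lemma mem_ker_theta {P I : Ideal A} (hPI : P ≤ I) (x : Clim A P) :
    x ∈ RingHom.ker (thetaMap A P I hPI) ↔
      ∀ ν : ℕ, (x : ∀ ν, A ⧸ P ^ ν) ν ∈ (Ib P I ν) ^ ν := by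
  rw [RingHom.mem_ker]
  constructor
  · intro h ν
    obtain ⟨a, ha⟩ := Ideal.Quotient.mk_surjective ((x : ∀ ν, A ⧸ P ^ ν) ν)
    have h2 : Ideal.Quotient.factor (S := P ^ ν) (T := I ^ ν) (Ideal.pow_right_mono hPI ν)
        ((x : ∀ ν, A ⧸ P ^ ν) ν) = 0 := by
      rw [← theta_apply hPI x ν, h]; rfl
    rw [← ha, Ideal.Quotient.factor_mk] at h2
    rw [← ha, mem_Ib_pow]
    exact Ideal.mem_sup_left (Ideal.Quotient.eq_zero_iff_mem.mp h2)
  · intro h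
    apply Subtype.ext; funext ν
    obtain ⟨a, ha⟩ := Ideal.Quotient.mk_surjective ((x : ∀ ν, A ⧸ P ^ ν) ν)
    have h2 := h ν
    rw [← ha, mem_Ib_pow] at h2
    have h3 : a ∈ I ^ ν := by
      rwa [sup_eq_left.mpr (Ideal.pow_right_mono hPI ν)] at h2
    show Ideal.Quotient.factor (S := P ^ ν) (T := I ^ ν) (Ideal.pow_right_mono hPI ν)
        ((x : ∀ ν, A ⧸ P ^ ν) ν) = 0
    rw [← ha, Ideal.Quotient.factor_mk]
    exact Ideal.Quotient.eq_zero_iff_mem.mpr h3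

end Generic

open CategoryTheory in
theorem main_aux {A : Type*} [CommRing A] (P I : Ideal A) (hPI : P ≤ I)
    (hfin : ∀ ν : ℕ, Finite (A ⧸ P ^ ν)) :
    ∃ e : Clim A P, IsIdempotentElem e ∧
      RingHom.ker (thetaMap A P I hPI) = Ideal.span {e} ∧
      Set.InjOn (thetaMap A P I hPI) (Ideal.span {1 - e} : Ideal (Clim A P)) ∧
      ∀ y : Clim A I, ∃ x ∈ Ideal.span {1 - e}, thetaMap A P I hPI x = y := by
  classical
  -- stabilization of the chain of powers of `Ib P I ν` in the finite ring `A/P^ν`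
  have hstab : ∀ ν : ℕ, ∃ N : ℕ, ∀ k, N ≤ k → (Ib P I ν) ^ k = (Ib P I ν) ^ N := by
    intro ν
    haveI := hfin ν
    haveI : Finite (Ideal (A ⧸ P ^ ν)) :=
      Finite.of_injective (fun J : Ideal (A ⧸ P ^ ν) => (J : Set (A ⧸ P ^ ν))) (fun _ _ h => SetLike.coe_injective h)
    obtain ⟨a, b, hab, he⟩ := Finite.exists_ne_map_eq_of_infinite
      (fun k : ℕ => (Ib P I ν) ^ k)
    have step : ∀ (a b : ℕ), a < b → (Ib P I ν) ^ a = (Ib P I ν) ^ b →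
        ∀ k, a ≤ k → (Ib P I ν) ^ k = (Ib P I ν) ^ a := by
      intro a b hab heq
      have succ : (Ib P I ν) ^ (a + 1) = (Ib P I ν) ^ a :=
        le_antisymm (Ideal.pow_le_pow_right (Nat.le_succ a))
          (heq ▸ Ideal.pow_le_pow_right hab)
      intro k hk
      induction k, hk using Nat.le_induction with
      | base => rfl
      | succ k hk ih => rw [pow_succ, ih, ← pow_succ, succ]
    rcases hab.lt_or_gt with h | h
    · exact ⟨a, step a b h he⟩
    · exact ⟨b, step b a h he.symm⟩
  choose N0 hN0 using hstab
  set M : ℕ → ℕ := fun ν => (Finset.range (ν + 1)).sup N0 + ν with hM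
  have hMmono : Monotone M := by
    intro a b hab
    exact Nat.add_le_add (Finset.sup_mono (Finset.range_subset_range.mpr (by omega))) hab
  have hN0M : ∀ ν, N0 ν ≤ M ν := fun ν =>
    le_trans (Finset.le_sup (Finset.self_mem_range_succ ν)) (Nat.le_add_right _ _)
  have hMν : ∀ ν, ν ≤ M ν := fun ν => Nat.le_add_left ν _
  have hMstab : ∀ ν k, M ν ≤ k → (Ib P I ν) ^ k = (Ib P I ν) ^ (M ν) := by
    intro ν k hk
    rw [hN0 ν k ((hN0M ν).trans hk), hN0 ν (M ν) (hN0M ν)]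
  set L : ∀ ν : ℕ, Ideal (A ⧸ P ^ ν) := fun ν => (Ib P I ν) ^ (M ν) with hL
  have hLpow : ∀ ν, L ν ≤ (Ib P I ν) ^ ν := fun ν => Ideal.pow_le_pow_right (hMν ν)
  have hLsq : ∀ ν, L ν ≤ L ν * L ν := by
    intro ν
    have h1 : L ν * L ν = (Ib P I ν) ^ (M ν + M ν) := (pow_add _ _ _).symm
    rw [h1, hMstab ν (M ν + M ν) (Nat.le_add_right _ _)]
  have hLtrans : ∀ {m ν : ℕ} (h : m ≤ ν), (L ν).map (qtrans P h) = L m := by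
    intro m ν h
    rw [hL]
    simp only
    rw [Ideal.map_pow, trans_map_Ib]
    exact hMstab m (M ν) (hMmono h)
  -- idempotent generators at each level
  have hidem : ∀ ν : ℕ, ∃ e : A ⧸ P ^ ν, e ∈ L ν ∧ ∀ y ∈ L ν, e * y = y := by
    intro ν
    haveI := hfin ν
    obtain ⟨r, hr1, hr2⟩ := Submodule.exists_sub_one_mem_and_smul_eq_zero_of_fg_of_le_smul
      (L ν) (L ν) (IsNoetherian.noetherian _) (by rw [Ideal.smul_eq_mul]; exact hLsq ν)
    refine ⟨1 - r, ?_, ?_⟩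
    · have := (L ν).neg_mem hr1
      simpa [neg_sub] using this
    · intro y hy
      have h2 := hr2 y hy
      rw [smul_eq_mul] at h2
      rw [sub_mul, one_mul, h2, sub_zero]
  choose eL heL1 heL2 using hidem
  have huniq : ∀ (ν : ℕ) (f : A ⧸ P ^ ν), f ∈ L ν → (∀ y ∈ L ν, f * y = y) → f = eL ν := by
    intro ν f hf hfy
    calc f = eL ν * f := (heL2 ν f hf).symm
    _ = f * eL ν := mul_comm _ _
    _ = eL ν := hfy (eL ν) (heL1 ν)
  have hcomp : ∀ {m ν : ℕ} (h : m ≤ ν), qtrans P h (eL ν) = eL m := by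
    intro m ν h
    apply huniq
    · have h1 : qtrans P h (eL ν) ∈ (L ν).map (qtrans P h) :=
        Ideal.mem_map_of_mem _ (heL1 ν)
      rwa [hLtrans h] at h1
    · intro y hy
      rw [← hLtrans h] at hy
      obtain ⟨y', hy', rfl⟩ := (Ideal.mem_map_iff_of_surjective _
        (trans_surjective P h)).mp hy
      rw [← map_mul, heL2 ν y' hy']
  set e : Clim A P := ⟨fun ν => eL ν, fun m ν h => hcomp h⟩ with he
  have hee : IsIdempotentElem e := by
    apply Subtype.ext; funext ν
    show eL ν * eL ν = eL ν
    exact heL2 ν (eL ν) (heL1 ν)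
  have heker : e ∈ RingHom.ker (thetaMap A P I hPI) := by
    rw [mem_ker_theta hPI]
    intro ν
    exact hLpow ν (heL1 ν)
  have hkerL : ∀ x : Clim A P, x ∈ RingHom.ker (thetaMap A P I hPI) →
      ∀ ν, (x : ∀ ν, A ⧸ P ^ ν) ν ∈ L ν := by
    intro x hx ν
    rw [mem_ker_theta hPI] at hx
    have hμ : ν ≤ max ν (M ν) := le_max_left _ _
    have h1 : (x : ∀ ν, A ⧸ P ^ ν) ν
        = qtrans P hμ ((x : ∀ ν, A ⧸ P ^ ν) (max ν (M ν))) := (x.2 hμ).symm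
    have h3 : qtrans P hμ ((x : ∀ ν, A ⧸ P ^ ν) (max ν (M ν)))
        ∈ ((Ib P I (max ν (M ν))) ^ (max ν (M ν))).map (qtrans P hμ) :=
      Ideal.mem_map_of_mem _ (hx _)
    rw [Ideal.map_pow, trans_map_Ib, hMstab ν _ (le_max_right _ _)] at h3
    rw [h1]
    exact h3
  have hker : RingHom.ker (thetaMap A P I hPI) = Ideal.span {e} := by
    apply le_antisymm
    · intro x hx
      rw [Ideal.mem_span_singleton']
      refine ⟨x, ?_⟩
      apply Subtype.ext; funext ν
      show (x : ∀ ν, A ⧸ P ^ ν) ν * eL ν = (x : ∀ ν, A ⧸ P ^ ν) ν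
      rw [mul_comm]
      exact heL2 ν _ (hkerL x hx ν)
    · rw [Ideal.span_le, Set.singleton_subset_iff]
      exact heker
  have hinj : Set.InjOn (thetaMap A P I hPI) (Ideal.span {1 - e} : Ideal (Clim A P)) := by
    have hz : ∀ x : Clim A P, x ∈ (Ideal.span {1 - e} : Ideal (Clim A P)) → e * x = 0 := by
      intro x hx
      obtain ⟨c, rfl⟩ := Ideal.mem_span_singleton'.mp hx
      have h1 : e * (1 - e) = 0 := by rw [mul_sub, mul_one, hee, sub_self]
      calc e * (c * (1 - e)) = c * (e * (1 - e)) := by ring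
      _ = 0 := by rw [h1, mul_zero]
    intro x hx y hy hxy
    have hxy' : x - y ∈ RingHom.ker (thetaMap A P I hPI) := by
      rw [RingHom.mem_ker, map_sub, hxy, sub_self]
    rw [hker, Ideal.mem_span_singleton'] at hxy'
    obtain ⟨d, hd⟩ := hxy'
    have h1 : e * (x - y) = x - y := by
      rw [← hd]
      calc e * (d * e) = d * (e * e) := by ring
      _ = d * e := by rw [hee]
    have h2 : x - y = 0 := by
      rw [← h1, mul_sub, hz x hx, hz y hy, sub_zero]
    exact sub_eq_zero.mp h2
  refine ⟨e, hee, hker, hinj, ?_⟩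
  intro y
  let F : ℕᵒᵖ ⥤ Type _ :=
    { obj := fun ν => { s : A ⧸ P ^ ν.unop //
        Ideal.Quotient.factor (S := P ^ ν.unop) (T := I ^ ν.unop) (Ideal.pow_right_mono hPI ν.unop) s
          = (y : ∀ ν, A ⧸ I ^ ν) ν.unop }
      map := fun {ν μ} h => TypeCat.ofHom (fun s => ⟨qtrans P (leOfHom h.unop) s.1, by
        obtain ⟨a, ha⟩ := Ideal.Quotient.mk_surjective s.1
        have hs := s.2
        rw [← ha, Ideal.Quotient.factor_mk] at hs
        rw [← ha, trans_mk, Ideal.Quotient.factor_mk, ← y.2 (leOfHom h.unop), ← hs,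
          Ideal.Quotient.factor_mk]⟩)
      map_id := by
        intro ν
        ext s
        obtain ⟨a, ha⟩ := Ideal.Quotient.mk_surjective s.1
        show qtrans P _ s.1 = s.1
        rw [← ha, trans_mk]
      map_comp := by
        intro ν μ κ f g
        ext s
        obtain ⟨a, ha⟩ := Ideal.Quotient.mk_surjective s.1
        show qtrans P _ s.1 = qtrans P _ (qtrans P _ s.1)
        rw [← ha, trans_mk, trans_mk, trans_mk] }
  haveI : ∀ j : ℕᵒᵖ, Finite (F.obj j) := by
    intro j
    haveI := hfin j.unop
    exact Subtype.finite
  haveI : ∀ j : ℕᵒᵖ, Nonempty (F.obj j) := by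
    intro j
    obtain ⟨a, ha⟩ := Ideal.Quotient.mk_surjective ((y : ∀ ν, A ⧸ I ^ ν) j.unop)
    exact ⟨⟨Ideal.Quotient.mk _ a, by rw [Ideal.Quotient.factor_mk, ha]⟩⟩
  obtain ⟨σ, hσ⟩ := nonempty_sections_of_finite_inverse_system F
  have hx0mem : (fun ν => (σ (Opposite.op ν)).1) ∈ Clim A P := by
    intro m ν h
    exact congrArg Subtype.val (hσ ((homOfLE h).op))
  set x0 : Clim A P := ⟨fun ν => (σ (Opposite.op ν)).1, hx0mem⟩ with hx0
  have hx0y : thetaMap A P I hPI x0 = y := by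
    apply Subtype.ext; funext ν
    exact (σ (Opposite.op ν)).2
  refine ⟨(1 - e) * x0, Ideal.mem_span_singleton'.mpr ⟨x0, mul_comm _ _⟩, ?_⟩
  have hez : thetaMap A P I hPI e = 0 := RingHom.mem_ker.mp heker
  rw [map_mul, map_sub, map_one, hez, sub_zero, one_mul, hx0y]

lemma coeff_sum_single {R : Type*} [CommRing R] [Fintype R] (k : R → ℤ) (s : R) :
    ((∑ r : R, (MonoidAlgebra.single r (k r))) : ZR R).coeff s = k s := by
  rw [MonoidAlgebra.coeff_sum, Finsupp.finset_sum_apply]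
  classical
  simp [MonoidAlgebra.coeff_single, Finsupp.single_apply]

lemma finiteQuot (p : ℕ) (hp : 0 < p) (R : Type*) [CommRing R] [Finite R] (ν : ℕ) :
    Finite (ZR R ⧸ (Ideal.span {(p : ZR R)}) ^ ν) := by
  classical
  haveI := Fintype.ofFinite R
  set n : ℕ := p ^ ν with hn
  have hnpos : 0 < n := pow_pos hp ν
  have hnz : (n : ℤ) ≠ 0 := by positivity
  have hspan : (Ideal.span {(p : ZR R)}) ^ ν = Ideal.span {((n : ℕ) : ZR R)} := by
    rw [Ideal.span_singleton_pow]
    norm_cast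
  refine Finite.of_surjective (fun c : R → Fin n =>
    Ideal.Quotient.mk ((Ideal.span {(p : ZR R)}) ^ ν)
      (∑ r : R, MonoidAlgebra.single r ((c r : ℕ) : ℤ))) ?_
  intro x
  obtain ⟨f, rfl⟩ := Ideal.Quotient.mk_surjective x
  refine ⟨fun r => ⟨(f.coeff r % (n : ℤ)).toNat, ?_⟩, ?_⟩
  · have h1 : 0 ≤ f.coeff r % (n : ℤ) := Int.emod_nonneg _ hnz
    have h2 : f.coeff r % (n : ℤ) < n := Int.emod_lt_of_pos _ (by exact_mod_cast hnpos)
    omega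
  · rw [Ideal.Quotient.eq, hspan, Ideal.mem_span_singleton]
    refine ⟨∑ r : R, MonoidAlgebra.single r (-(f.coeff r / (n : ℤ))), ?_⟩
    have hmul : ((n : ℕ) : ZR R) * (∑ r : R, MonoidAlgebra.single r (-(f.coeff r / (n : ℤ))))
        = (n : ℕ) • (∑ r : R, MonoidAlgebra.single r (-(f.coeff r / (n : ℤ)))) :=
      (nsmul_eq_mul _ _).symm
    rw [hmul]
    ext s
    rw [MonoidAlgebra.coeff_sub, MonoidAlgebra.coeff_smul, Finsupp.sub_apply, Finsupp.smul_apply, coeff_sum_single, coeff_sum_single]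
    simp only
    have h1 : 0 ≤ f.coeff s % (n : ℤ) := Int.emod_nonneg _ hnz
    rw [Int.toNat_of_nonneg h1]
    rw [Int.emod_def]
    ring_nf

/-- Let `p` be a prime and `R` a *finite* perfect `𝔽_p`-algebra. Let
`ℤ_pR = lim_ν ℤR/p^ν·ℤR` be the `p`-adic completion of `ℤR` and `θ : ℤ_pR → C(R)` the natural
surjective ring homomorphism.  Then there is an idempotent `e ∈ ℤ_pR` such that
`ker θ = e·ℤ_pR`, and the restriction of `θ` to the ideal `(1-e)·ℤ_pR` is a ring isomorphism
onto `C(R)` (it is injective on `(1-e)·ℤ_pR` and maps it onto `C(R)`). -/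
theorem statement17 (p : ℕ) [Fact p.Prime] (R : Type*) [CommRing R] [CharP R p] [Finite R]
    (hperf : Function.Bijective fun x : R => x ^ p) :
    ∃ e : Clim (ZR R) (Ideal.span {(p : ZR R)}),
      IsIdempotentElem e ∧
      RingHom.ker (thetaMap (ZR R) (Ideal.span {(p : ZR R)}) (Iid R) (spanP_le_Iid p R)) =
        Ideal.span {e} ∧
      Set.InjOn (thetaMap (ZR R) (Ideal.span {(p : ZR R)}) (Iid R) (spanP_le_Iid p R))
        (Ideal.span {1 - e} : Ideal (Clim (ZR R) (Ideal.span {(p : ZR R)}))) ∧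
      ∀ y : CR R, ∃ x ∈ Ideal.span {1 - e},
        thetaMap (ZR R) (Ideal.span {(p : ZR R)}) (Iid R) (spanP_le_Iid p R) x = y := by
  obtain ⟨e, h1, h2, h3, h4⟩ := main_aux (Ideal.span {(p : ZR R)}) (Iid R)
    (spanP_le_Iid p R) (fun ν => finiteQuot p (Fact.out (p := p.Prime)).pos R ν)
  exact ⟨e, h1, h2, h3, h4⟩
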